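/- arXiv:2504.21617 — 2 statements merged into one kernel-verified Lean document; each statement's English description precedes it below -/
import Mathlib

section
/- Let w, w*, Y be square-integrable random variables with positive variances such that E[w* | w] = w (equivalently, Cov(w, w* - w) = 0 holds because w* - w is orthogonal to w). If Var(w*)/Var(w) ≤ 1/(1-R²) for R² ∈ [0,1), then |Cov(w - w*, Y)| ≤ √(1 - cor²(w, Y)) · √((R²/(1-R²))·Var(w)·Var(Y)). -/
open MeasureTheory

set_option linter.unusedSectionVars false

/-- Expectation of a real random variable. -/
noncomputable def expec {Ω : Type*} [MeasurableSpace Ω] (μ : Measure Ω) (X : Ω → ℝ) : ℝ :=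
  ∫ ω, X ω ∂μ

/-- Covariance of two real random variables. -/
noncomputable def cov {Ω : Type*} [MeasurableSpace Ω] (μ : Measure Ω) (X Y : Ω → ℝ) : ℝ :=
  expec μ (fun ω => (X ω - expec μ X) * (Y ω - expec μ Y))

/-- Variance of a real random variable. -/
noncomputable def Var {Ω : Type*} [MeasurableSpace Ω] (μ : Measure Ω) (X : Ω → ℝ) : ℝ :=
  cov μ X X

/-- Pearson correlation of two real random variables. -/
noncomputable def cor {Ω : Type*} [MeasurableSpace Ω] (μ : Measure Ω) (X Y : Ω → ℝ) : ℝ :=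
  cov μ X Y / Real.sqrt (Var μ X * Var μ Y)

section Aux

variable {Ω : Type*} [MeasurableSpace Ω] (μ : Measure Ω) [IsProbabilityMeasure μ]

lemma aux_int_mul {f g : Ω → ℝ} (hf : MemLp f 2 μ) (hg : MemLp g 2 μ) :
    Integrable (fun x => f x * g x) μ := by
  have h : Integrable (fun x => (f x ^ 2 + g x ^ 2) / 2) μ :=
    (hf.integrable_sq.add hg.integrable_sq).div_const 2
  refine h.mono' (hf.aestronglyMeasurable.mul hg.aestronglyMeasurable) ?_
  filter_upwards with x
  rw [Real.norm_eq_abs, abs_mul]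
  nlinarith [sq_nonneg (|f x| - |g x|), sq_abs (f x), sq_abs (g x), abs_nonneg (f x),
    abs_nonneg (g x)]

lemma aux_center {X : Ω → ℝ} (hX : MemLp X 2 μ) :
    MemLp (fun ω => X ω - expec μ X) 2 μ :=
  hX.sub (memLp_const _)

lemma aux_int_cov {X Y : Ω → ℝ} (hX : MemLp X 2 μ) (hY : MemLp Y 2 μ) :
    Integrable (fun ω => (X ω - expec μ X) * (Y ω - expec μ Y)) μ :=
  aux_int_mul μ (aux_center μ hX) (aux_center μ hY)

lemma cov_comm (X Y : Ω → ℝ) : cov μ X Y = cov μ Y X := by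
  unfold cov expec; congr 1; funext ω; ring

lemma cov_smul_add {X Y Z : Ω → ℝ} (a b : ℝ) (hX : MemLp X 2 μ) (hY : MemLp Y 2 μ)
    (hZ : MemLp Z 2 μ) :
    cov μ X (fun ω => a * Y ω + b * Z ω) = a * cov μ X Y + b * cov μ X Z := by
  have hiY : Integrable Y μ := hY.integrable one_le_two
  have hiZ : Integrable Z μ := hZ.integrable one_le_two
  have hE : expec μ (fun ω => a * Y ω + b * Z ω) = a * expec μ Y + b * expec μ Z := by
    unfold expec
    rw [integral_add (hiY.const_mul a) (hiZ.const_mul b), integral_const_mul, integral_const_mul]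
  have h1 := aux_int_cov μ hX hY
  have h2 := aux_int_cov μ hX hZ
  unfold cov
  rw [hE]
  have heq : (fun ω => (X ω - expec μ X) *
      ((a * Y ω + b * Z ω) - (a * expec μ Y + b * expec μ Z)))
      = fun ω => a * ((X ω - expec μ X) * (Y ω - expec μ Y))
        + b * ((X ω - expec μ X) * (Z ω - expec μ Z)) := by
    funext ω; ring
  unfold expec
  beta_reduce
  unfold expec at heq h1 h2
  rw [heq, integral_add (h1.const_mul a) (h2.const_mul b), integral_const_mul, integral_const_mul]

lemma Var_nonneg (X : Ω → ℝ) : 0 ≤ Var μ X := by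
  unfold Var cov expec
  exact integral_nonneg fun ω => mul_self_nonneg _

lemma cov_sq_le {X Y : Ω → ℝ} (hX : MemLp X 2 μ) (hY : MemLp Y 2 μ) :
    cov μ X Y ^ 2 ≤ Var μ X * Var μ Y := by
  have key : ∀ t : ℝ, 0 ≤ Var μ X * (t * t) + (2 * cov μ X Y) * t + Var μ Y := by
    intro t
    have hF : MemLp (fun ω => t * X ω + 1 * Y ω) 2 μ := (hX.const_mul t).add (hY.const_mul 1)
    have hFX : cov μ X (fun ω => t * X ω + 1 * Y ω) = t * cov μ X X + 1 * cov μ X Y :=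
      cov_smul_add μ t 1 hX hX hY
    have hFY : cov μ Y (fun ω => t * X ω + 1 * Y ω) = t * cov μ Y X + 1 * cov μ Y Y :=
      cov_smul_add μ t 1 hY hX hY
    have hVF : Var μ (fun ω => t * X ω + 1 * Y ω)
        = Var μ X * (t * t) + (2 * cov μ X Y) * t + Var μ Y := by
      show cov μ (fun ω => t * X ω + 1 * Y ω) (fun ω => t * X ω + 1 * Y ω) = _
      rw [cov_smul_add μ t 1 hF hX hY, cov_comm μ _ X, cov_comm μ _ Y, hFX, hFY,
        cov_comm μ Y X]
      show t * (t * cov μ X X + 1 * cov μ X Y) + 1 * (t * cov μ X Y + 1 * cov μ Y Y)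
          = cov μ X X * (t * t) + (2 * cov μ X Y) * t + cov μ Y Y
      ring
    rw [← hVF]
    exact Var_nonneg μ _
  have hd := discrim_le_zero key
  unfold discrim at hd
  nlinarith [hd]

end Aux

theorem stmt_6 {Ω : Type*} [MeasurableSpace Ω] (μ : Measure Ω) [IsProbabilityMeasure μ]
    (w wstar Y : Ω → ℝ) (R2 : ℝ)
    (hw : MemLp w 2 μ) (hwstar : MemLp wstar 2 μ) (hY : MemLp Y 2 μ)
    (hVw : 0 < Var μ w) (hVwstar : 0 < Var μ wstar) (hVY : 0 < Var μ Y)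
    (horth : cov μ w (fun ω => wstar ω - w ω) = 0)
    (hR2 : 0 ≤ R2 ∧ R2 < 1)
    (hvar : Var μ wstar / Var μ w ≤ 1 / (1 - R2)) :
    |cov μ (fun ω => w ω - wstar ω) Y|
      ≤ Real.sqrt (1 - (cor μ w Y) ^ 2) *
        Real.sqrt ((R2 / (1 - R2)) * Var μ w * Var μ Y) := by
  obtain ⟨hR0, hR1⟩ := hR2
  have h1R : 0 < 1 - R2 := by linarith
  have hne : (1 - R2) ≠ 0 := ne_of_gt h1R
  set ε : Ω → ℝ := fun ω => wstar ω - w ω with hε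
  have hεmem : MemLp ε 2 μ := hwstar.sub hw
  set a : ℝ := cov μ w Y with ha
  set Vw : ℝ := Var μ w with hVwdef
  set VY : ℝ := Var μ Y with hVYdef
  set Vε : ℝ := Var μ ε with hVεdef
  have hwstar_eq : wstar = fun ω => 1 * w ω + 1 * ε ω := by
    funext ω
    show wstar ω = 1 * w ω + 1 * (wstar ω - w ω)
    ring
  have e1 : cov μ wstar wstar = 1 * cov μ wstar w + 1 * cov μ wstar ε := by
    nth_rewrite 2 [hwstar_eq]
    exact cov_smul_add μ 1 1 hwstar hw hεmem
  have e2 : cov μ wstar w = Vw + cov μ w ε := by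
    rw [cov_comm μ wstar w, hwstar_eq, cov_smul_add μ 1 1 hw hw hεmem]
    have h1 : cov μ w w = Vw := rfl
    rw [h1]; ring
  have e3 : cov μ wstar ε = cov μ w ε + Vε := by
    rw [cov_comm μ wstar ε, hwstar_eq, cov_smul_add μ 1 1 hεmem hw hεmem, cov_comm μ ε w]
    have h1 : cov μ ε ε = Vε := rfl
    rw [h1]; ring
  have hVsum : Var μ wstar = Vw + Vε := by
    show cov μ wstar wstar = Vw + Vε
    rw [e1, e2, e3, horth]; ring
  have hVε_le : Vε ≤ R2 / (1 - R2) * Vw := by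
    rw [div_le_div_iff₀ hVw h1R] at hvar
    have hkey : Vw / (1 - R2) = Vw + R2 / (1 - R2) * Vw := by field_simp; ring
    have h1 : Var μ wstar ≤ Vw / (1 - R2) := by
      rw [le_div_iff₀ h1R]; linarith
    rw [hVsum, hkey] at h1
    linarith
  set c : ℝ := a / Vw with hc
  set Y' : Ω → ℝ := fun ω => 1 * Y ω + (-c) * w ω with hY'
  have hY'mem : MemLp Y' 2 μ := (hY.const_mul 1).add (hw.const_mul (-c))
  have hεY' : cov μ ε Y' = cov μ ε Y := by
    rw [hY', cov_smul_add μ 1 (-c) hεmem hY hw, cov_comm μ ε w, horth]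
    ring
  have f1 : cov μ Y' Y' = 1 * cov μ Y' Y + (-c) * cov μ Y' w := by
    nth_rewrite 2 [hY']
    exact cov_smul_add μ 1 (-c) hY'mem hY hw
  have f2 : cov μ Y' Y = VY + (-c) * a := by
    rw [cov_comm μ Y' Y, hY', cov_smul_add μ 1 (-c) hY hY hw, cov_comm μ Y w]
    have h1 : cov μ Y Y = VY := rfl
    have h2 : cov μ w Y = a := rfl
    rw [h1, h2]; ring
  have f3 : cov μ Y' w = a + (-c) * Vw := by
    rw [cov_comm μ Y' w, hY', cov_smul_add μ 1 (-c) hw hY hw]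
    have h1 : cov μ w Y = a := rfl
    have h2 : cov μ w w = Vw := rfl
    rw [h1, h2]; ring
  have hVY' : Var μ Y' = VY - a ^ 2 / Vw := by
    show cov μ Y' Y' = VY - a ^ 2 / Vw
    rw [f1, f2, f3, hc]
    field_simp
    ring
  have hCS : cov μ ε Y ^ 2 ≤ Vε * (VY - a ^ 2 / Vw) := by
    have h := cov_sq_le μ hεmem hY'mem
    rw [hεY', hVY'] at h
    exact h
  have haCS : a ^ 2 ≤ Vw * VY := cov_sq_le μ hw hY
  have hres_nonneg : 0 ≤ VY - a ^ 2 / Vw := by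
    rw [sub_nonneg, div_le_iff₀ hVw]
    nlinarith
  have hVε0 : 0 ≤ Vε := Var_nonneg μ ε
  have hbound : cov μ ε Y ^ 2 ≤ (1 - a ^ 2 / (Vw * VY)) * (R2 / (1 - R2) * Vw * VY) := by
    have h2 : Vε * (VY - a ^ 2 / Vw) ≤ (R2 / (1 - R2) * Vw) * (VY - a ^ 2 / Vw) :=
      mul_le_mul_of_nonneg_right hVε_le hres_nonneg
    have h3 : (R2 / (1 - R2) * Vw) * (VY - a ^ 2 / Vw)
        = (1 - a ^ 2 / (Vw * VY)) * (R2 / (1 - R2) * Vw * VY) := by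
      field_simp
    linarith [h3 ▸ h2]
  have hcor2 : (cor μ w Y) ^ 2 = a ^ 2 / (Vw * VY) := by
    unfold cor
    rw [div_pow, Real.sq_sqrt (by positivity : (0:ℝ) ≤ Vw * VY)]
  have hLHS : cov μ (fun ω => w ω - wstar ω) Y = - cov μ ε Y := by
    have heq : (fun ω => w ω - wstar ω) = fun ω => (-1) * ε ω + 0 * w ω := by
      funext ω
      show w ω - wstar ω = (-1) * (wstar ω - w ω) + 0 * w ω
      ring
    rw [heq, cov_comm μ _ Y, cov_smul_add μ (-1) 0 hY hεmem hw, cov_comm μ Y ε]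
    ring
  have hcor_le : (cor μ w Y) ^ 2 ≤ 1 := by
    rw [hcor2, div_le_one (by positivity)]
    exact haCS
  rw [hLHS, abs_neg]
  have hrhs_sq : (1 - (cor μ w Y) ^ 2) * (R2 / (1 - R2) * Vw * VY)
      = (1 - a ^ 2 / (Vw * VY)) * (R2 / (1 - R2) * Vw * VY) := by rw [hcor2]
  calc |cov μ ε Y| = Real.sqrt ((cov μ ε Y) ^ 2) := (Real.sqrt_sq_eq_abs _).symm
    _ ≤ Real.sqrt ((1 - (cor μ w Y) ^ 2) * (R2 / (1 - R2) * Vw * VY)) := by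
        apply Real.sqrt_le_sqrt
        rw [hrhs_sq]
        exact hbound
    _ = Real.sqrt (1 - (cor μ w Y) ^ 2) * Real.sqrt (R2 / (1 - R2) * Vw * VY) := by
        rw [Real.sqrt_mul (by linarith)]
end

section
/- For random variables w, Y with 0 < Var(w), Var(Y) < ∞, and any random variable ε with Var(ε) ≤ c²·Var(w) and Cov(w, ε) = 0, we have |Cov(ε, Y)| ≤ c·√(1 - cor²(w,Y))·√(Var(w)·Var(Y)), and this bound is achieved by ε = c·√(Var(w)/Var(r))·r where r is the residual of Y after linear projection onto w (provided Var(r) > 0). -/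
open MeasureTheory

lemma l2_mul_int {Ω : Type*} [MeasurableSpace Ω] {μ : Measure Ω} {f g : Ω → ℝ}
    (hf : MemLp f 2 μ) (hg : MemLp g 2 μ) :
    Integrable (fun ω => f ω * g ω) μ := by
  have h := ((hf.integrable_sq.add hg.integrable_sq).div_const 2)
  refine h.mono' (hf.1.mul hg.1) (Filter.Eventually.of_forall fun ω => ?_)
  rw [Real.norm_eq_abs, abs_mul]
  simp only [Pi.add_apply]
  nlinarith [sq_abs (f ω), sq_abs (g ω), sq_nonneg (|f ω| - |g ω|), abs_nonneg (f ω), abs_nonneg (g ω)]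

lemma cs_int {Ω : Type*} [MeasurableSpace Ω] {μ : Measure Ω} {f g : Ω → ℝ}
    (hf : MemLp f 2 μ) (hg : MemLp g 2 μ) :
    |∫ ω, f ω * g ω ∂μ| ≤ Real.sqrt (∫ ω, f ω * f ω ∂μ) * Real.sqrt (∫ ω, g ω * g ω ∂μ) := by
  set A := ∫ ω, f ω * f ω ∂μ with hAdef
  set B := ∫ ω, f ω * g ω ∂μ with hBdef
  set C := ∫ ω, g ω * g ω ∂μ with hCdef
  have hA : 0 ≤ A := integral_nonneg fun ω => mul_self_nonneg _
  have key : ∀ t : ℝ, 0 ≤ A * (t * t) + (2 * B) * t + C := by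
    intro t
    have h2 : (0:ℝ) ≤ ∫ ω, (t * f ω + g ω) * (t * f ω + g ω) ∂μ :=
      integral_nonneg fun ω => mul_self_nonneg _
    have h3 : ∫ ω, (t * f ω + g ω) * (t * f ω + g ω) ∂μ = A * (t * t) + (2 * B) * t + C := by
      have e : ∀ ω, (t * f ω + g ω) * (t * f ω + g ω)
          = (t * t) * (f ω * f ω) + (2 * t) * (f ω * g ω) + g ω * g ω := fun ω => by ring
      simp_rw [e]
      have i1 : Integrable (fun ω => (t * t) * (f ω * f ω)) μ := (l2_mul_int hf hf).const_mul _
      have i2 : Integrable (fun ω => (2 * t) * (f ω * g ω)) μ := (l2_mul_int hf hg).const_mul _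
      have i12 : Integrable (fun ω => (t * t) * (f ω * f ω) + (2 * t) * (f ω * g ω)) μ := i1.add i2
      rw [integral_add i12 (l2_mul_int hg hg), integral_add i1 i2,
          integral_const_mul, integral_const_mul]
      rw [← hAdef, ← hBdef, ← hCdef]; ring
    rw [h3] at h2; exact h2
  have hd := discrim_le_zero key
  rw [discrim] at hd
  have hB2 : B ^ 2 ≤ A * C := by nlinarith
  calc |B| = Real.sqrt (B ^ 2) := (Real.sqrt_sq_eq_abs B).symm
    _ ≤ Real.sqrt (A * C) := Real.sqrt_le_sqrt hB2
    _ = _ := Real.sqrt_mul hA C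

/-- The centered version of a random variable. -/
noncomputable def ctr {Ω : Type*} [MeasurableSpace Ω] (μ : Measure Ω) (X : Ω → ℝ) : Ω → ℝ :=
  fun ω => X ω - expec μ X

lemma cov_eq_ctr {Ω : Type*} [MeasurableSpace Ω] (μ : Measure Ω) (X Z : Ω → ℝ) :
    cov μ X Z = ∫ ω, ctr μ X ω * ctr μ Z ω ∂μ := rfl

lemma ctr_memℒp {Ω : Type*} [MeasurableSpace Ω] {μ : Measure Ω} [IsFiniteMeasure μ]
    {X : Ω → ℝ} (hX : MemLp X 2 μ) : MemLp (ctr μ X) 2 μ :=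
  hX.sub (memLp_const _)

lemma integral_ctr {Ω : Type*} [MeasurableSpace Ω] {μ : Measure Ω} [IsProbabilityMeasure μ]
    {X : Ω → ℝ} (hX : Integrable X μ) : ∫ ω, ctr μ X ω ∂μ = 0 := by
  simp only [ctr, expec]
  rw [integral_sub hX (integrable_const _)]
  simp

theorem stmt_18 {Ω : Type*} [MeasurableSpace Ω] (μ : Measure Ω) [IsProbabilityMeasure μ]
    (w Y ε : Ω → ℝ) (c : ℝ)
    (hw : MemLp w 2 μ) (hY : MemLp Y 2 μ) (hε : MemLp ε 2 μ)
    (hc : 0 ≤ c)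
    (hVw : 0 < Var μ w) (hVY : 0 < Var μ Y)
    (hVε : Var μ ε ≤ c ^ 2 * Var μ w)
    (horth : cov μ w ε = 0) :
    |cov μ ε Y| ≤ c * Real.sqrt (1 - (cor μ w Y) ^ 2) * Real.sqrt (Var μ w * Var μ Y) ∧
    (∀ r : Ω → ℝ,
      r = (fun ω => Y ω - expec μ Y - (cov μ w Y / Var μ w) * (w ω - expec μ w)) →
      0 < Var μ r →
      Var μ (fun ω => c * Real.sqrt (Var μ w / Var μ r) * r ω) ≤ c ^ 2 * Var μ w ∧
      cov μ w (fun ω => c * Real.sqrt (Var μ w / Var μ r) * r ω) = 0 ∧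
      |cov μ (fun ω => c * Real.sqrt (Var μ w / Var μ r) * r ω) Y|
        = c * Real.sqrt (1 - (cor μ w Y) ^ 2) * Real.sqrt (Var μ w * Var μ Y)) := by
  set Vw := Var μ w with hVwdef
  set VY := Var μ Y with hVYdef
  set cw := cov μ w Y with hcwdef
  set β := cw / Vw with hβdef
  have hWm : MemLp (ctr μ w) 2 μ := ctr_memℒp hw
  have hYm : MemLp (ctr μ Y) 2 μ := ctr_memℒp hY
  have hEm : MemLp (ctr μ ε) 2 μ := ctr_memℒp hε
  set R : Ω → ℝ := fun ω => ctr μ Y ω - β * ctr μ w ω with hRdef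
  have hRm : MemLp R 2 μ := hYm.sub (hWm.const_mul β)
  have iW : ∫ ω, ctr μ w ω ∂μ = 0 := integral_ctr (hw.integrable one_le_two)
  have iY : ∫ ω, ctr μ Y ω ∂μ = 0 := integral_ctr (hY.integrable one_le_two)
  have iR : ∫ ω, R ω ∂μ = 0 := by
    simp only [hRdef]
    rw [integral_sub (hYm.integrable one_le_two) ((hWm.integrable one_le_two).const_mul β),
        integral_const_mul, iW, iY]
    ring
  have icw : cw = ∫ ω, ctr μ w ω * ctr μ Y ω ∂μ := by rw [hcwdef, cov_eq_ctr]
  have iVw : Vw = ∫ ω, ctr μ w ω * ctr μ w ω ∂μ := by rw [hVwdef]; exact cov_eq_ctr μ w w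
  have iVY : VY = ∫ ω, ctr μ Y ω * ctr μ Y ω ∂μ := by rw [hVYdef]; exact cov_eq_ctr μ Y Y
  have iVε : Var μ ε = ∫ ω, ctr μ ε ω * ctr μ ε ω ∂μ := cov_eq_ctr μ ε ε
  have iWE : ∫ ω, ctr μ w ω * ctr μ ε ω ∂μ = 0 := by rw [← cov_eq_ctr μ w ε]; exact horth
  have iEW : ∫ ω, ctr μ ε ω * ctr μ w ω ∂μ = 0 := by
    rw [← iWE]
    exact integral_congr_ae (Filter.Eventually.of_forall fun ω => mul_comm _ _)
  have iER : ∫ ω, ctr μ ε ω * R ω ∂μ = ∫ ω, ctr μ ε ω * ctr μ Y ω ∂μ := by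
    have e : ∀ ω, ctr μ ε ω * R ω
        = ctr μ ε ω * ctr μ Y ω - β * (ctr μ ε ω * ctr μ w ω) := by
      intro ω; simp only [hRdef]; ring
    simp_rw [e]
    rw [integral_sub (l2_mul_int hEm hYm) ((l2_mul_int hEm hWm).const_mul β),
        integral_const_mul, iEW, mul_zero, sub_zero]
  have iWR : ∫ ω, ctr μ w ω * R ω ∂μ = 0 := by
    have e : ∀ ω, ctr μ w ω * R ω
        = ctr μ w ω * ctr μ Y ω - β * (ctr μ w ω * ctr μ w ω) := by
      intro ω; simp only [hRdef]; ring
    simp_rw [e]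
    rw [integral_sub (l2_mul_int hWm hYm) ((l2_mul_int hWm hWm).const_mul β),
        integral_const_mul, ← icw, ← iVw, hβdef]
    field_simp
    ring
  have iRY : ∫ ω, R ω * ctr μ Y ω ∂μ = VY - β * cw := by
    have e : ∀ ω, R ω * ctr μ Y ω
        = ctr μ Y ω * ctr μ Y ω - β * (ctr μ w ω * ctr μ Y ω) := by
      intro ω; simp only [hRdef]; ring
    simp_rw [e]
    rw [integral_sub (l2_mul_int hYm hYm) ((l2_mul_int hWm hYm).const_mul β),
        integral_const_mul, ← icw, ← iVY]
  have iRR : ∫ ω, R ω * R ω ∂μ = VY - β * cw := by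
    have e : ∀ ω, R ω * R ω
        = R ω * ctr μ Y ω - β * (ctr μ w ω * R ω) := by
      intro ω; simp only [hRdef]; ring
    simp_rw [e]
    rw [integral_sub (l2_mul_int hRm hYm) ((l2_mul_int hWm hRm).const_mul β),
        integral_const_mul, iWR, mul_zero, sub_zero, iRY]
  have hTnn : 0 ≤ ∫ ω, R ω * R ω ∂μ := integral_nonneg fun ω => mul_self_nonneg _
  have hcor : 1 - (cor μ w Y) ^ 2 = (VY - β * cw) / VY := by
    simp only [cor]
    rw [← hcwdef, ← hVwdef, ← hVYdef, div_pow,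
        Real.sq_sqrt (mul_nonneg hVw.le hVY.le), hβdef]
    field_simp
  have hrhs : Real.sqrt (1 - (cor μ w Y) ^ 2) * Real.sqrt (Vw * VY)
      = Real.sqrt Vw * Real.sqrt (∫ ω, R ω * R ω ∂μ) := by
    rw [hcor, ← iRR, ← Real.sqrt_mul (div_nonneg hTnn hVY.le)]
    rw [show (∫ ω, R ω * R ω ∂μ) / VY * (Vw * VY) = Vw * (∫ ω, R ω * R ω ∂μ) by
      field_simp]
    exact Real.sqrt_mul hVw.le _
  constructor
  · have e1 : cov μ ε Y = ∫ ω, ctr μ ε ω * R ω ∂μ := by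
      rw [cov_eq_ctr μ ε Y]; exact iER.symm
    rw [e1]
    calc |∫ ω, ctr μ ε ω * R ω ∂μ|
        ≤ Real.sqrt (∫ ω, ctr μ ε ω * ctr μ ε ω ∂μ) * Real.sqrt (∫ ω, R ω * R ω ∂μ) :=
          cs_int hEm hRm
      _ ≤ Real.sqrt (c ^ 2 * Vw) * Real.sqrt (∫ ω, R ω * R ω ∂μ) := by
          refine mul_le_mul_of_nonneg_right (Real.sqrt_le_sqrt ?_) (Real.sqrt_nonneg _)
          rw [← iVε]; exact hVε
      _ = c * Real.sqrt (1 - (cor μ w Y) ^ 2) * Real.sqrt (Vw * VY) := by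
          rw [Real.sqrt_mul (sq_nonneg c), Real.sqrt_sq hc, mul_assoc, ← hrhs]; ring
  · intro r hr hVr
    have hrR : r = R := by
      rw [hr]; funext ω; simp only [hRdef, ctr]
    subst hrR
    have hexpR : expec μ R = 0 := iR
    have hVarR : Var μ R = ∫ ω, R ω * R ω ∂μ := by
      rw [show Var μ R = cov μ R R from rfl, cov_eq_ctr]
      have hcR : ctr μ R = R := funext fun ω => by simp [ctr, hexpR]
      simp only [hcR]
    rw [hVarR] at hVr ⊢
    set T := ∫ ω, R ω * R ω ∂μ with hTdef
    set a := c * Real.sqrt (Vw / T) with ha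
    have han : 0 ≤ a := mul_nonneg hc (Real.sqrt_nonneg _)
    have ha2 : a ^ 2 = c ^ 2 * (Vw / T) := by
      rw [ha, mul_pow, Real.sq_sqrt (div_nonneg hVw.le hVr.le)]
    have hmaR : expec μ (fun ω => a * R ω) = 0 := by
      show (∫ ω, a * R ω ∂μ) = 0
      rw [integral_const_mul, iR, mul_zero]
    have hcaR : ctr μ (fun ω => a * R ω) = fun ω => a * R ω :=
      funext fun ω => by simp [ctr, hmaR]
    have hVaR : Var μ (fun ω => a * R ω) = a ^ 2 * T := by
      rw [show Var μ (fun ω => a * R ω) = cov μ (fun ω => a * R ω) (fun ω => a * R ω) from rfl,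
          cov_eq_ctr]
      simp only [hcaR]
      have e : ∀ ω, (a * R ω) * (a * R ω) = a ^ 2 * (R ω * R ω) := fun ω => by ring
      simp_rw [e]
      rw [integral_const_mul, ← hTdef]
    refine ⟨?_, ?_, ?_⟩
    · rw [hVaR, ha2]
      rw [show c ^ 2 * (Vw / T) * T = c ^ 2 * Vw by field_simp]
    · rw [cov_eq_ctr]
      simp only [hcaR]
      have e : ∀ ω, ctr μ w ω * (a * R ω) = a * (ctr μ w ω * R ω) := fun ω => by ring
      simp_rw [e]
      rw [integral_const_mul, iWR, mul_zero]
    · have hcovY : cov μ (fun ω => a * R ω) Y = a * T := by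
        rw [cov_eq_ctr]
        simp only [hcaR]
        have e : ∀ ω, (a * R ω) * ctr μ Y ω = a * (R ω * ctr μ Y ω) := fun ω => by ring
        simp_rw [e]
        rw [integral_const_mul, iRY, ← iRR]
      rw [hcovY, abs_of_nonneg (mul_nonneg han hVr.le), ha]
      have key : Real.sqrt (Vw / T) * T = Real.sqrt Vw * Real.sqrt T := by
        rw [Real.sqrt_div hVw.le, div_mul_eq_mul_div, mul_div_assoc, Real.div_sqrt]
      rw [mul_assoc, key, ← hrhs]; ring
end
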